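/- arXiv:2401.16667 — 2 statements merged into one kernel-verified Lean document; each statement's English description precedes it below -/
import Mathlib

section
/- Sub-Gaussian moment generating function bound for the empirical distribution function under sampling without replacement (Lemma S3). Let a_1, …, a_n ∈ ℝ be fixed, let 1 ≤ n₁ ≤ n − 1 with n₀ = n − n₁, and let Z = (Z_1, …, Z_n) be uniformly distributed over {z ∈ {0,1}ⁿ : Σ_i z_i = n₁}. For y ∈ ℝ define Ĝ(Z, y) = n₁⁻¹ Σ_i Z_i·1{a_i ≤ y} and G(y) = n⁻¹ Σ_i 1{a_i ≤ y}. Then for all y, t ∈ ℝ: E[exp(t(Ĝ(Z, y) − G(y)))] ≤ exp(n₀ t² / (n₁(n + 2))). -/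
open scoped BigOperators Classical

noncomputable section

section AuxLemmasS3

open Real

lemma hoeff_scalar (p v : ℝ) (hp0 : 0 ≤ p) (hp1 : p ≤ 1) :
    p * Real.exp v + (1 - p) ≤ Real.exp (p * v + v ^ 2 / 8) := by
  rcases eq_or_lt_of_le hp0 with h0 | h0
  · subst h0
    simpa using Real.one_le_exp (by positivity)
  rcases eq_or_lt_of_le hp1 with h1 | h1
  · subst h1
    simp only [sub_self, add_zero, one_mul]
    exact Real.exp_le_exp.2 (by nlinarith [sq_nonneg v])
  -- 0 < p < 1
  have hq : 0 < 1 - p := by linarith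
  have hD : ∀ x : ℝ, 0 < 1 - p + p * Real.exp x := fun x => by
    have := Real.exp_pos x; nlinarith
  set D : ℝ → ℝ := fun x => 1 - p + p * Real.exp x with hDdef
  set G : ℝ → ℝ := fun x => p + x / 4 - p * Real.exp x / D x with hGdef
  set g : ℝ → ℝ := fun x => p * x + x ^ 2 / 8 - Real.log (D x) with hgdef
  have hDd : ∀ x : ℝ, HasDerivAt D (p * Real.exp x) x := by
    intro x
    exact ((Real.hasDerivAt_exp x).const_mul p).const_add (1 - p)
  have hg : ∀ x : ℝ, HasDerivAt g (G x) x := by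
    intro x
    have h1 : HasDerivAt (fun x : ℝ => p * x + x ^ 2 / 8) (p + x / 4) x := by
      have h2 : HasDerivAt (fun x : ℝ => p * x) p x := by
        simpa using (hasDerivAt_id x).const_mul p
      have h3 := (hasDerivAt_pow 2 x).div_const 8
      exact (h2.add h3).congr_deriv (by norm_num; ring)
    have h4 : HasDerivAt (fun x => Real.log (D x)) (p * Real.exp x / D x) x :=
      (hDd x).log (ne_of_gt (hD x))
    exact h1.sub h4
  have hG : ∀ x : ℝ, HasDerivAt G (1 / 4 - (1 - p) * (p * Real.exp x) / (D x) ^ 2) x := by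
    intro x
    have h5 : HasDerivAt (fun x => p * Real.exp x) (p * Real.exp x) x :=
      (Real.hasDerivAt_exp x).const_mul p
    have h6 : HasDerivAt (fun x => p * Real.exp x / D x)
        ((p * Real.exp x * D x - p * Real.exp x * (p * Real.exp x)) / (D x) ^ 2) x :=
      h5.div (hDd x) (ne_of_gt (hD x))
    have h7 : HasDerivAt (fun x : ℝ => p + x / 4) (1 / 4) x := by
      simpa using ((hasDerivAt_id x).div_const 4).const_add p
    have : D x = 1 - p + p * Real.exp x := rfl
    have hDx0 : D x ≠ 0 := ne_of_gt (hD x)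
    exact (h7.sub h6).congr_deriv (by field_simp; ring)
  have hGmono : Monotone G := by
    apply monotone_of_hasDerivAt_nonneg hG
    intro x
    have hx := hD x
    have he := Real.exp_pos x
    have key : 4 * ((1 - p) * (p * Real.exp x)) ≤ (D x) ^ 2 := by
      have : D x = 1 - p + p * Real.exp x := rfl
      nlinarith [sq_nonneg ((1 - p) - p * Real.exp x)]
    have h2 : (0:ℝ) < (D x) ^ 2 := by positivity
    simp only [Pi.zero_apply]
    rw [sub_nonneg, div_le_iff₀ h2]
    have hDx : D x = 1 - p + p * rexp x := rfl
    rw [hDx]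
    nlinarith [sq_nonneg ((1 - p) - p * rexp x)]
  have hG0 : G 0 = 0 := by
    have : D 0 = 1 := by simp [hDdef]
    simp [hGdef, this]
  have hgnonneg : ∀ x : ℝ, 0 ≤ g x := by
    have hg0 : g 0 = 0 := by
      have : D 0 = 1 := by simp [hDdef]
      simp [hgdef, this]
    intro x
    rcases le_total 0 x with hx | hx
    · have hmono : MonotoneOn g (Set.Ici 0) := by
        apply monotoneOn_of_hasDerivWithinAt_nonneg (convex_Ici 0)
          (fun y _ => (hg y).continuousAt.continuousWithinAt)
          (fun y hy => (hg y).hasDerivWithinAt)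
        intro y hy
        rw [interior_Ici] at hy
        have : G 0 ≤ G y := hGmono (le_of_lt hy)
        rw [hG0] at this
        exact this
      have := hmono (Set.self_mem_Ici) (Set.mem_Ici.2 hx) hx
      rwa [hg0] at this
    · have hmono : AntitoneOn g (Set.Iic 0) := by
        apply antitoneOn_of_hasDerivWithinAt_nonpos (convex_Iic 0)
          (fun y _ => (hg y).continuousAt.continuousWithinAt)
          (fun y hy => (hg y).hasDerivWithinAt)
        intro y hy
        rw [interior_Iic] at hy
        have : G y ≤ G 0 := hGmono (le_of_lt hy)
        rw [hG0] at this
        exact this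
      have := hmono (Set.mem_Iic.2 hx) (Set.self_mem_Iic) hx
      rwa [hg0] at this
    
  have h8 := hgnonneg v
  have h9 : Real.log (D v) ≤ p * v + v ^ 2 / 8 := by
    simp only [hgdef] at h8; linarith
  calc p * Real.exp v + (1 - p) = Real.exp (Real.log (D v)) := by
        rw [Real.exp_log (hD v)]
        show p * rexp v + (1 - p) = 1 - p + p * rexp v
        ring
    _ ≤ Real.exp (p * v + v ^ 2 / 8) := Real.exp_le_exp.2 h9


lemma double_count {α : Type*} [DecidableEq α] (s : Finset α) (k : ℕ) (f : Finset α → ℝ) :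
    ((k : ℝ) + 1) * ∑ u ∈ s.powersetCard (k + 1), f u
      = ∑ x ∈ s, ∑ v ∈ (s.erase x).powersetCard k, f (insert x v) := by
  have step1 : ((k : ℝ) + 1) * ∑ u ∈ s.powersetCard (k + 1), f u
      = ∑ u ∈ s.powersetCard (k + 1), ∑ _x ∈ u, f u := by
    rw [Finset.mul_sum]
    refine Finset.sum_congr rfl fun u hu => ?_
    rw [Finset.sum_const, (Finset.mem_powersetCard.1 hu).2]
    push_cast [nsmul_eq_mul]
    ring
  rw [step1, Finset.sum_sigma', Finset.sum_sigma']
  refine Finset.sum_nbij' (fun q => ⟨q.2, q.1.erase q.2⟩) (fun q => ⟨insert q.1 q.2, q.1⟩)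
      ?_ ?_ ?_ ?_ ?_
  · rintro ⟨u, x⟩ hq
    simp only [Finset.mem_sigma, Finset.mem_powersetCard] at hq ⊢
    obtain ⟨⟨hsub, hcard⟩, hx⟩ := hq
    refine ⟨hsub hx, ?_, ?_⟩
    · intro i hi
      simp only [Finset.mem_erase] at hi ⊢
      exact ⟨hi.1, hsub hi.2⟩
    · rw [Finset.card_erase_of_mem hx, hcard]
      omega
  · rintro ⟨x, v⟩ hq
    simp only [Finset.mem_sigma, Finset.mem_powersetCard] at hq ⊢
    obtain ⟨hx, hsub, hcard⟩ := hq
    have hxv : x ∉ v := fun hxv => (Finset.mem_erase.1 (hsub hxv)).1 rfl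
    refine ⟨⟨?_, ?_⟩, Finset.mem_insert_self x v⟩
    · intro i hi
      rcases Finset.mem_insert.1 hi with rfl | hi
      · exact hx
      · exact (Finset.mem_erase.1 (hsub hi)).2
    · rw [Finset.card_insert_of_notMem hxv, hcard]
  · rintro ⟨u, x⟩ hq
    simp only [Finset.mem_sigma, Finset.mem_powersetCard] at hq
    simp [Finset.insert_erase hq.2]
  · rintro ⟨x, v⟩ hq
    simp only [Finset.mem_sigma, Finset.mem_powersetCard] at hq
    obtain ⟨hx, hsub, hcard⟩ := hq
    have hxv : x ∉ v := fun hxv => (Finset.mem_erase.1 (hsub hxv)).1 rfl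
    simp [Finset.erase_insert hxv]
  · rintro ⟨u, x⟩ hq
    simp only [Finset.mem_sigma, Finset.mem_powersetCard] at hq
    simp [Finset.insert_erase hq.2]


lemma step_scalar (σ : ℝ) (n m k : ℕ) (hm1 : 1 ≤ m) (hmn : m ≤ n) (hk : k + 1 ≤ n) :
    (m : ℝ) * (Real.exp σ * Real.exp (σ * k * ((m : ℝ) - 1) / ((n : ℝ) - 1) + k * σ ^ 2 / 8))
      + ((n : ℝ) - m) * Real.exp (σ * k * (m : ℝ) / ((n : ℝ) - 1) + k * σ ^ 2 / 8)
    ≤ (n : ℝ) * Real.exp (σ * ((k : ℝ) + 1) * (m : ℝ) / (n : ℝ) + ((k : ℝ) + 1) * σ ^ 2 / 8) := by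
  rcases Nat.lt_or_ge n 2 with hn2 | hn2
  · have hn : n = 1 := by omega
    have hm : m = 1 := by omega
    have hk0 : k = 0 := by omega
    subst hn hm hk0
    norm_num
    positivity
  · have h2n : (2 : ℝ) ≤ (n : ℝ) := by exact_mod_cast hn2
    have hd : (0 : ℝ) < (n : ℝ) - 1 := by linarith
    have hnpos : (0 : ℝ) < (n : ℝ) := by linarith
    have hkle : (k : ℝ) ≤ (n : ℝ) - 1 := by
      have : (k : ℝ) + 1 ≤ (n : ℝ) := by exact_mod_cast hk
      linarith
    set β : ℝ := ((n : ℝ) - 1 - k) / ((n : ℝ) - 1) with hβ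
    have hβ0 : 0 ≤ β := by
      apply div_nonneg (by linarith) (by linarith)
    have hβ1 : β ≤ 1 := by
      rw [hβ, div_le_one hd]
      have : (0:ℝ) ≤ (k:ℝ) := Nat.cast_nonneg k
      linarith
    set A : ℝ := Real.exp (σ * k * (m : ℝ) / ((n : ℝ) - 1) + k * σ ^ 2 / 8) with hA
    have hm0 : (0 : ℝ) ≤ (m : ℝ) := Nat.cast_nonneg m
    have hmn' : (m : ℝ) ≤ (n : ℝ) := by exact_mod_cast hmn
    have h1 : Real.exp σ * Real.exp (σ * k * ((m : ℝ) - 1) / ((n : ℝ) - 1) + k * σ ^ 2 / 8)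
        = A * Real.exp (σ * β) := by
      rw [hA, ← Real.exp_add, ← Real.exp_add]
      congr 1
      rw [hβ]
      field_simp
      ring
    have h2 : A * Real.exp ((m / n : ℝ) * (σ * β) + (σ * β) ^ 2 / 8)
        ≤ Real.exp (σ * ((k : ℝ) + 1) * (m : ℝ) / (n : ℝ) + ((k : ℝ) + 1) * σ ^ 2 / 8) := by
      rw [hA, ← Real.exp_add]
      apply Real.exp_le_exp.2
      have hb2 : β ^ 2 ≤ 1 := by nlinarith
      have hv : (σ * β) ^ 2 ≤ σ ^ 2 := by
        nlinarith [mul_nonneg (sq_nonneg σ) (sub_nonneg.2 hb2)]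
      have hexp_eq : σ * k * (m : ℝ) / ((n : ℝ) - 1) + ((m : ℝ) / (n : ℝ)) * (σ * β)
          = σ * ((k : ℝ) + 1) * (m : ℝ) / (n : ℝ) := by
        rw [hβ]
        field_simp
        ring
      linarith [hexp_eq, hv]
    have hHo := hoeff_scalar ((m : ℝ) / (n : ℝ)) (σ * β) (by positivity)
      ((div_le_one hnpos).2 hmn')
    calc (m : ℝ) * (Real.exp σ * Real.exp (σ * k * ((m : ℝ) - 1) / ((n : ℝ) - 1) + k * σ ^ 2 / 8))
          + ((n : ℝ) - m) * A
        = (n : ℝ) * A * (((m : ℝ) / (n : ℝ)) * Real.exp (σ * β) + (1 - (m : ℝ) / (n : ℝ))) := by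
          rw [h1]
          field_simp
      _ ≤ (n : ℝ) * A * Real.exp (((m : ℝ) / (n : ℝ)) * (σ * β) + (σ * β) ^ 2 / 8) := by
          apply mul_le_mul_of_nonneg_left hHo
          positivity
      _ = (n : ℝ) * (A * Real.exp (((m : ℝ) / (n : ℝ)) * (σ * β) + (σ * β) ^ 2 / 8)) := by ring
      _ ≤ (n : ℝ) * Real.exp (σ * ((k : ℝ) + 1) * (m : ℝ) / (n : ℝ) + ((k : ℝ) + 1) * σ ^ 2 / 8) := by
          apply mul_le_mul_of_nonneg_left h2 (le_of_lt hnpos)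


lemma key_bound {α : Type*} [DecidableEq α] (σ : ℝ) (p : α → Prop) [DecidablePred p] :
    ∀ (k : ℕ) (s : Finset α), k ≤ s.card →
    ∑ u ∈ s.powersetCard k, Real.exp (σ * ((u.filter p).card : ℝ))
      ≤ (s.card.choose k : ℝ) *
        Real.exp (σ * (k : ℝ) * ((s.filter p).card : ℝ) / (s.card : ℝ) + (k : ℝ) * σ ^ 2 / 8) := by
  intro k
  induction k with
  | zero =>
    intro s _
    simp [Finset.powersetCard_zero]
  | succ k IH =>
    intro s hks
    have hcard_pos : 0 < s.card := by omega
    by_cases hm : (s.filter p).card = 0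
    · -- all filters are empty
      have hfe : s.filter p = ∅ := Finset.card_eq_zero.1 hm
      have hterm : ∀ u ∈ s.powersetCard (k + 1),
          Real.exp (σ * ((u.filter p).card : ℝ)) = 1 := by
        intro u hu
        have hsub : u.filter p ⊆ s.filter p :=
          Finset.filter_subset_filter p (Finset.mem_powersetCard.1 hu).1
        rw [hfe, Finset.subset_empty] at hsub
        rw [hsub]
        simp
      rw [Finset.sum_congr rfl hterm, Finset.sum_const, Finset.card_powersetCard, hm]
      simp only [nsmul_eq_mul, mul_one, Nat.cast_zero]
      have h1 : (1 : ℝ) ≤ Real.exp (σ * ((k : ℝ) + 1) * 0 / (s.card : ℝ) + ((k : ℝ) + 1) * σ ^ 2 / 8) := by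
        apply Real.one_le_exp
        have : σ * ((k : ℝ) + 1) * 0 / (s.card : ℝ) = 0 := by ring
        rw [this]
        positivity
      have h2 : (0 : ℝ) ≤ (s.card.choose (k + 1) : ℝ) := Nat.cast_nonneg _
      push_cast
      nlinarith [h1, h2]
    · have hm1 : 1 ≤ (s.filter p).card := Nat.pos_of_ne_zero hm
      set m := (s.filter p).card with hmdef
      set n := s.card with hndef
      have hmn : m ≤ n := Finset.card_filter_le s p
      -- the S function
      set S : α → ℝ := fun x => ∑ v ∈ (s.erase x).powersetCard k,
        Real.exp (σ * ((v.filter p).card : ℝ)) with hSdef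
      have hcast_n : ((n - 1 : ℕ) : ℝ) = (n : ℝ) - 1 := by
        have := hcard_pos; push_cast [Nat.cast_sub (by omega : 1 ≤ n)]; ring
      have hcast_m : ((m - 1 : ℕ) : ℝ) = (m : ℝ) - 1 := by
        push_cast [Nat.cast_sub hm1]; ring
      have hSP : ∀ x ∈ s.filter p, S x ≤ ((n - 1).choose k : ℝ) *
          Real.exp (σ * (k : ℝ) * ((m : ℝ) - 1) / ((n : ℝ) - 1) + (k : ℝ) * σ ^ 2 / 8) := by
        intro x hx
        have hxs : x ∈ s := (Finset.mem_filter.1 hx).1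
        have hce : (s.erase x).card = n - 1 := by rw [Finset.card_erase_of_mem hxs]
        have hfc : ((s.erase x).filter p).card = m - 1 := by
          rw [Finset.filter_erase, Finset.card_erase_of_mem hx]
        have := IH (s.erase x) (by omega)
        rwa [hce, hfc, hcast_n, hcast_m] at this
      have hSQ : ∀ x ∈ s.filter (fun x => ¬ p x), S x ≤ ((n - 1).choose k : ℝ) *
          Real.exp (σ * (k : ℝ) * (m : ℝ) / ((n : ℝ) - 1) + (k : ℝ) * σ ^ 2 / 8) := by
        intro x hx
        have hxs : x ∈ s := (Finset.mem_filter.1 hx).1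
        have hpx : ¬ p x := (Finset.mem_filter.1 hx).2
        have hce : (s.erase x).card = n - 1 := by rw [Finset.card_erase_of_mem hxs]
        have hfc : ((s.erase x).filter p).card = m := by
          rw [Finset.filter_erase, Finset.erase_eq_of_notMem]
          intro hmem
          exact hpx (Finset.mem_filter.1 hmem).2
        have := IH (s.erase x) (by omega)
        rwa [hce, hfc, hcast_n] at this
      -- rewrite inner sums
      have hinner : ∀ x ∈ s, (∑ v ∈ (s.erase x).powersetCard k,
          Real.exp (σ * (((insert x v).filter p).card : ℝ)))
          = (if p x then Real.exp σ else 1) * S x := by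
        intro x hx
        rw [hSdef, Finset.mul_sum]
        refine Finset.sum_congr rfl fun v hv => ?_
        have hxv : x ∉ v := by
          have hsub := (Finset.mem_powersetCard.1 hv).1
          intro hxv
          exact (Finset.mem_erase.1 (hsub hxv)).1 rfl
        rw [Finset.filter_insert]
        by_cases hpx : p x
        · rw [if_pos hpx, if_pos hpx, Finset.card_insert_of_notMem
            (fun h => hxv (Finset.mem_of_mem_filter x h))]
          rw [← Real.exp_add]
          congr 1
          push_cast
          ring
        · rw [if_neg hpx, if_neg hpx, one_mul]
      have hdc := double_count s k (fun u => Real.exp (σ * ((u.filter p).card : ℝ)))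
      rw [Finset.sum_congr rfl hinner] at hdc
      -- split the sum
      have hsplit := Finset.sum_filter_add_sum_filter_not s p
        (fun x => (if p x then Real.exp σ else 1) * S x)
      have hP : ∑ x ∈ s.filter p, (if p x then Real.exp σ else 1) * S x
          = ∑ x ∈ s.filter p, Real.exp σ * S x := by
        refine Finset.sum_congr rfl fun x hx => ?_
        rw [if_pos (Finset.mem_filter.1 hx).2]
      have hQ : ∑ x ∈ s.filter (fun x => ¬ p x), (if p x then Real.exp σ else 1) * S x
          = ∑ x ∈ s.filter (fun x => ¬ p x), S x := by
        refine Finset.sum_congr rfl fun x hx => ?_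
        rw [if_neg (Finset.mem_filter.1 hx).2, one_mul]
      set B1 : ℝ := ((n - 1).choose k : ℝ) *
          Real.exp (σ * (k : ℝ) * ((m : ℝ) - 1) / ((n : ℝ) - 1) + (k : ℝ) * σ ^ 2 / 8) with hB1
      set B2 : ℝ := ((n - 1).choose k : ℝ) *
          Real.exp (σ * (k : ℝ) * (m : ℝ) / ((n : ℝ) - 1) + (k : ℝ) * σ ^ 2 / 8) with hB2
      have hsum1 : ∑ x ∈ s.filter p, Real.exp σ * S x ≤ (m : ℝ) * (Real.exp σ * B1) := by
        calc ∑ x ∈ s.filter p, Real.exp σ * S x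
            ≤ ∑ _x ∈ s.filter p, Real.exp σ * B1 := by
              refine Finset.sum_le_sum fun x hx => ?_
              exact mul_le_mul_of_nonneg_left (hSP x hx) (le_of_lt (Real.exp_pos σ))
          _ = (m : ℝ) * (Real.exp σ * B1) := by
              rw [Finset.sum_const, nsmul_eq_mul, ← hmdef]
      have hcardnot : (s.filter (fun x => ¬ p x)).card = n - m := by
        have := Finset.card_filter_add_card_filter_not (s := s) (p := p)
        omega
      have hsum2 : ∑ x ∈ s.filter (fun x => ¬ p x), S x ≤ ((n : ℝ) - m) * B2 := by
        calc ∑ x ∈ s.filter (fun x => ¬ p x), S x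
            ≤ ∑ _x ∈ s.filter (fun x => ¬ p x), B2 := Finset.sum_le_sum hSQ
          _ = ((n : ℝ) - m) * B2 := by
              rw [Finset.sum_const, nsmul_eq_mul, hcardnot, Nat.cast_sub hmn]
      -- assemble
      have hmain : ((k : ℝ) + 1) * ∑ u ∈ s.powersetCard (k + 1),
          Real.exp (σ * ((u.filter p).card : ℝ))
          ≤ ((n - 1).choose k : ℝ) * ((n : ℝ) *
            Real.exp (σ * ((k : ℝ) + 1) * (m : ℝ) / (n : ℝ) + ((k : ℝ) + 1) * σ ^ 2 / 8)) := by
        rw [hdc, ← hsplit, hP, hQ]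
        have hstep := step_scalar σ n m k hm1 hmn hks
        have hexpand : (m : ℝ) * (Real.exp σ * B1) + ((n : ℝ) - m) * B2
            = ((n - 1).choose k : ℝ) *
              ((m : ℝ) * (Real.exp σ * Real.exp (σ * (k : ℝ) * ((m : ℝ) - 1) / ((n : ℝ) - 1) + (k : ℝ) * σ ^ 2 / 8))
               + ((n : ℝ) - m) * Real.exp (σ * (k : ℝ) * (m : ℝ) / ((n : ℝ) - 1) + (k : ℝ) * σ ^ 2 / 8)) := by
          rw [hB1, hB2]; ring
        have hnm : (0 : ℝ) ≤ ((n - 1).choose k : ℝ) := Nat.cast_nonneg _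
        calc ∑ x ∈ s.filter p, Real.exp σ * S x + ∑ x ∈ s.filter (fun x => ¬ p x), S x
            ≤ (m : ℝ) * (Real.exp σ * B1) + ((n : ℝ) - m) * B2 := add_le_add hsum1 hsum2
          _ = _ := hexpand
          _ ≤ _ := mul_le_mul_of_nonneg_left hstep hnm
      -- Nat identity
      have hnat : (n : ℝ) * ((n - 1).choose k : ℝ) = ((k : ℝ) + 1) * (n.choose (k + 1) : ℝ) := by
        have h := Nat.add_one_mul_choose_eq (n - 1) k
        have hsucc : n - 1 + 1 = n := by omega
        rw [hsucc] at h
        have h' : ((n : ℝ)) * ((n - 1).choose k : ℝ) = (n.choose (k + 1) : ℝ) * ((k : ℝ) + 1) := by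
          exact_mod_cast congrArg (fun x : ℕ => (x : ℝ)) h
        linear_combination h'
      have hfinal : ((k : ℝ) + 1) * ∑ u ∈ s.powersetCard (k + 1),
          Real.exp (σ * ((u.filter p).card : ℝ))
          ≤ ((k : ℝ) + 1) * ((n.choose (k + 1) : ℝ) *
            Real.exp (σ * ((k : ℝ) + 1) * (m : ℝ) / (n : ℝ) + ((k : ℝ) + 1) * σ ^ 2 / 8)) := by
        calc ((k : ℝ) + 1) * ∑ u ∈ s.powersetCard (k + 1),
            Real.exp (σ * ((u.filter p).card : ℝ))
            ≤ ((n - 1).choose k : ℝ) * ((n : ℝ) *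
              Real.exp (σ * ((k : ℝ) + 1) * (m : ℝ) / (n : ℝ) + ((k : ℝ) + 1) * σ ^ 2 / 8)) := hmain
          _ = ((n : ℝ) * ((n - 1).choose k : ℝ)) *
              Real.exp (σ * ((k : ℝ) + 1) * (m : ℝ) / (n : ℝ) + ((k : ℝ) + 1) * σ ^ 2 / 8) := by ring
          _ = ((k : ℝ) + 1) * ((n.choose (k + 1) : ℝ) *
              Real.exp (σ * ((k : ℝ) + 1) * (m : ℝ) / (n : ℝ) + ((k : ℝ) + 1) * σ ^ 2 / 8)) := by
              rw [hnat]; ring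
      have hk1 : (0 : ℝ) < (k : ℝ) + 1 := by positivity
      have := le_of_mul_le_mul_left hfinal hk1
      calc ∑ u ∈ s.powersetCard (k + 1), Real.exp (σ * ((u.filter p).card : ℝ))
          ≤ (n.choose (k + 1) : ℝ) *
            Real.exp (σ * ((k : ℝ) + 1) * (m : ℝ) / (n : ℝ) + ((k : ℝ) + 1) * σ ^ 2 / 8) := this
        _ = (n.choose (k + 1) : ℝ) *
            Real.exp (σ * ((k + 1 : ℕ) : ℝ) * (m : ℝ) / (n : ℝ) + ((k + 1 : ℕ) : ℝ) * σ ^ 2 / 8) := by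
            push_cast; ring_nf


end AuxLemmasS3

/-- The set of assignment vectors of a complete randomization: 0–1 vectors of length n
with exactly n₁ ones. -/
def assignSet (n n1 : ℕ) : Finset (Fin n → Bool) :=
  Finset.univ.filter (fun z => (Finset.univ.filter (fun i => z i)).card = n1)

/-- Empirical CDF of the values `a i` over the treated units of `z`. -/
def empCDF {n : ℕ} (n1 : ℕ) (a : Fin n → ℝ) (z : Fin n → Bool) (y : ℝ) : ℝ :=
  ((Finset.univ.filter (fun i => z i ∧ a i ≤ y)).card : ℝ) / (n1 : ℝ)

/-- Finite-population CDF of the values `a i`. -/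
def popCDF {n : ℕ} (a : Fin n → ℝ) (y : ℝ) : ℝ :=
  ((Finset.univ.filter (fun i => a i ≤ y)).card : ℝ) / (n : ℝ)

section AuxLemmasS3b

lemma transfer (n n1 : ℕ) (g : Finset (Fin n) → ℝ) :
    ∑ z ∈ assignSet n n1, g (Finset.univ.filter (fun i => z i))
      = ∑ u ∈ (Finset.univ : Finset (Fin n)).powersetCard n1, g u := by
  refine Finset.sum_nbij' (fun z => Finset.univ.filter (fun i => z i))
      (fun u => fun i => decide (i ∈ u)) ?_ ?_ ?_ ?_ ?_
  · intro z hz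
    rw [Finset.mem_powersetCard]
    exact ⟨Finset.filter_subset _ _ |>.trans (Finset.subset_univ _),
      (Finset.mem_filter.1 hz).2⟩
  · intro u hu
    rw [Finset.mem_powersetCard] at hu
    simp only [assignSet, Finset.mem_filter, Finset.mem_univ, true_and]
    have : (Finset.univ.filter (fun i => (decide (i ∈ u) : Bool))) = u := by
      ext i; simp
    rw [this]
    exact hu.2
  · intro z _
    funext i
    simp
  · intro u _
    ext i
    simp
  · intro z _
    rfl

lemma assign_card (n n1 : ℕ) : (assignSet n n1).card = n.choose n1 := by
  have h := transfer n n1 (fun _ => (1 : ℝ))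
  simp only [Finset.sum_const, nsmul_eq_mul, mul_one] at h
  have h2 : (assignSet n n1).card = ((Finset.univ : Finset (Fin n)).powersetCard n1).card := by
    exact_mod_cast h
  rw [h2, Finset.card_powersetCard, Finset.card_univ, Fintype.card_fin]

lemma mgf_bound (n k : ℕ) (hk : k ≤ n) (p : Fin n → Prop) (σ : ℝ) :
    ∑ z ∈ assignSet n k, Real.exp (σ * ((Finset.univ.filter (fun i => z i ∧ p i)).card : ℝ))
      ≤ (n.choose k : ℝ) *
        Real.exp (σ * (k : ℝ) * ((Finset.univ.filter p).card : ℝ) / (n : ℝ) + (k : ℝ) * σ ^ 2 / 8) := by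
  have hrw : ∀ z : Fin n → Bool, (Finset.univ.filter (fun i => z i ∧ p i))
      = (Finset.univ.filter (fun i => z i)).filter p := by
    intro z
    rw [Finset.filter_filter]
  have h1 : ∑ z ∈ assignSet n k, Real.exp (σ * ((Finset.univ.filter (fun i => z i ∧ p i)).card : ℝ))
      = ∑ u ∈ (Finset.univ : Finset (Fin n)).powersetCard k,
          Real.exp (σ * ((u.filter p).card : ℝ)) := by
    rw [← transfer n k (fun u => Real.exp (σ * ((u.filter p).card : ℝ)))]
    refine Finset.sum_congr rfl fun z _ => ?_
    rw [hrw z]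
  rw [h1]
  have h2 := key_bound σ p k (Finset.univ : Finset (Fin n))
    (by rw [Finset.card_univ, Fintype.card_fin]; exact hk)
  rwa [Finset.card_univ, Fintype.card_fin] at h2

lemma bound_one (n n1 : ℕ) (hn1 : 1 ≤ n1) (hn1n : n1 ≤ n) (hn : 1 ≤ n)
    (a : Fin n → ℝ) (y t : ℝ) :
    (∑ z ∈ assignSet n n1, Real.exp (t * (empCDF n1 a z y - popCDF a y)))
        / ((assignSet n n1).card : ℝ)
      ≤ Real.exp (t ^ 2 / (8 * (n1 : ℝ))) := by
  have hn1R : (0 : ℝ) < (n1 : ℝ) := by exact_mod_cast hn1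
  have hnR : (0 : ℝ) < (n : ℝ) := by exact_mod_cast hn
  set p : Fin n → Prop := fun i => a i ≤ y with hp
  set m := (Finset.univ.filter p).card with hm
  have hterm : ∀ z : Fin n → Bool, t * (empCDF n1 a z y - popCDF a y)
      = (t / (n1 : ℝ)) * ((Finset.univ.filter (fun i => z i ∧ p i)).card : ℝ)
        + (-(t * (m : ℝ) / (n : ℝ))) := by
    intro z
    rw [empCDF, popCDF]
    ring
  have hsum : ∑ z ∈ assignSet n n1, Real.exp (t * (empCDF n1 a z y - popCDF a y))
      = Real.exp (-(t * (m : ℝ) / (n : ℝ))) *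
        ∑ z ∈ assignSet n n1,
          Real.exp ((t / (n1 : ℝ)) * ((Finset.univ.filter (fun i => z i ∧ p i)).card : ℝ)) := by
    rw [Finset.mul_sum]
    refine Finset.sum_congr rfl fun z _ => ?_
    rw [hterm z, Real.exp_add, mul_comm]
  have hb := mgf_bound n n1 hn1n p (t / (n1 : ℝ))
  have hC : (0 : ℝ) < (n.choose n1 : ℝ) := by exact_mod_cast Nat.choose_pos hn1n
  have hexp : Real.exp (-(t * (m : ℝ) / (n : ℝ))) *
      Real.exp ((t / (n1 : ℝ)) * (n1 : ℝ) * (m : ℝ) / (n : ℝ) + (n1 : ℝ) * (t / (n1 : ℝ)) ^ 2 / 8)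
      = Real.exp (t ^ 2 / (8 * (n1 : ℝ))) := by
    rw [← Real.exp_add]
    congr 1
    field_simp
    ring
  rw [hsum, assign_card]
  rw [div_le_iff₀ hC]
  calc Real.exp (-(t * (m : ℝ) / (n : ℝ))) *
        ∑ z ∈ assignSet n n1,
          Real.exp ((t / (n1 : ℝ)) * ((Finset.univ.filter (fun i => z i ∧ p i)).card : ℝ))
      ≤ Real.exp (-(t * (m : ℝ) / (n : ℝ))) * ((n.choose n1 : ℝ) *
          Real.exp ((t / (n1 : ℝ)) * (n1 : ℝ) * (m : ℝ) / (n : ℝ) + (n1 : ℝ) * (t / (n1 : ℝ)) ^ 2 / 8)) := by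
        exact mul_le_mul_of_nonneg_left hb (le_of_lt (Real.exp_pos _))
    _ = (Real.exp (-(t * (m : ℝ) / (n : ℝ))) *
          Real.exp ((t / (n1 : ℝ)) * (n1 : ℝ) * (m : ℝ) / (n : ℝ) + (n1 : ℝ) * (t / (n1 : ℝ)) ^ 2 / 8))
          * (n.choose n1 : ℝ) := by ring
    _ = Real.exp (t ^ 2 / (8 * (n1 : ℝ))) * (n.choose n1 : ℝ) := by rw [hexp]


lemma flip_card (n : ℕ) (z : Fin n → Bool) :
    (Finset.univ.filter (fun i => (!z i : Bool))).card
      = n - (Finset.univ.filter (fun i => z i)).card := by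
  have h : (Finset.univ.filter (fun i => (!z i : Bool)))
      = Finset.univ \ (Finset.univ.filter (fun i => z i)) := by
    ext i
    simp [Bool.not_eq_true']
  rw [h, Finset.card_sdiff_of_subset (Finset.filter_subset _ _), Finset.card_univ, Fintype.card_fin]

lemma flip_sum (n n1 : ℕ) (hn1n : n1 ≤ n) (F : (Fin n → Bool) → ℝ) :
    ∑ z ∈ assignSet n n1, F (fun i => !(z i)) = ∑ w ∈ assignSet n (n - n1), F w := by
  refine Finset.sum_nbij' (fun z => fun i => !(z i)) (fun w => fun i => !(w i)) ?_ ?_ ?_ ?_ ?_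
  · intro z hz
    simp only [assignSet, Finset.mem_filter, Finset.mem_univ, true_and] at hz ⊢
    rw [flip_card, hz]
  · intro w hw
    simp only [assignSet, Finset.mem_filter, Finset.mem_univ, true_and] at hw ⊢
    rw [flip_card, hw]
    have := Finset.card_filter_le Finset.univ (fun i => (w i : Prop))
    rw [Finset.card_univ, Fintype.card_fin] at this
    omega
  · intro z _; funext i; simp
  · intro w _; funext i; simp
  · intro z _; rfl

lemma K_split (n : ℕ) (p : Fin n → Prop) (z : Fin n → Bool) :
    (Finset.univ.filter (fun i => z i ∧ p i)).card
      + (Finset.univ.filter (fun i => (!z i : Bool) ∧ p i)).card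
      = (Finset.univ.filter p).card := by
  classical
  have h := Finset.card_filter_add_card_filter_not
    (s := Finset.univ.filter p) (p := fun i => (z i : Prop))
  have h1 : (Finset.univ.filter p).filter (fun i => (z i : Prop))
      = Finset.univ.filter (fun i => z i ∧ p i) := by
    rw [Finset.filter_filter]
    apply Finset.filter_congr
    intro i _
    simp [and_comm]
  have h2 : (Finset.univ.filter p).filter (fun i => ¬ (z i : Prop))
      = Finset.univ.filter (fun i => (!z i : Bool) ∧ p i) := by
    rw [Finset.filter_filter]
    apply Finset.filter_congr
    intro i _
    simp [and_comm, Bool.not_eq_true]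
  rw [h1, h2] at h
  exact h

lemma bound_two (n n1 : ℕ) (hn1 : 1 ≤ n1) (hn1n : n1 + 1 ≤ n) (a : Fin n → ℝ) (y t : ℝ) :
    (∑ z ∈ assignSet n n1, Real.exp (t * (empCDF n1 a z y - popCDF a y)))
        / ((assignSet n n1).card : ℝ)
      ≤ Real.exp (((n : ℝ) - (n1 : ℝ)) * t ^ 2 / (8 * (n1 : ℝ) ^ 2)) := by
  have hn1R : (0 : ℝ) < (n1 : ℝ) := by exact_mod_cast hn1
  have hnR : (0 : ℝ) < (n : ℝ) := by
    have : (0 : ℕ) < n := by omega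
    exact_mod_cast this
  have hn0n : n - n1 ≤ n := Nat.sub_le n n1
  have hn0cast : ((n - n1 : ℕ) : ℝ) = (n : ℝ) - (n1 : ℝ) := by
    push_cast [Nat.cast_sub (by omega : n1 ≤ n)]
    ring
  set p : Fin n → Prop := fun i => a i ≤ y with hp
  set m := (Finset.univ.filter p).card with hm
  set σ' : ℝ := -(t / (n1 : ℝ)) with hσ'
  set c : ℝ := t * (m : ℝ) / (n1 : ℝ) - t * (m : ℝ) / (n : ℝ) with hc
  have hterm : ∀ z : Fin n → Bool, t * (empCDF n1 a z y - popCDF a y)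
      = σ' * ((Finset.univ.filter (fun i => (!z i : Bool) ∧ p i)).card : ℝ) + c := by
    intro z
    have hK := K_split n p z
    have hKR : ((Finset.univ.filter (fun i => z i ∧ p i)).card : ℝ)
        = (m : ℝ) - ((Finset.univ.filter (fun i => (!z i : Bool) ∧ p i)).card : ℝ) := by
      rw [hm]
      push_cast [← hK]
      ring
    rw [empCDF, popCDF, hσ', hc]
    rw [show (Finset.univ.filter (fun i => z i ∧ a i ≤ y)) =
        (Finset.univ.filter (fun i => z i ∧ p i)) from rfl]
    rw [hKR]
    rw [show (Finset.univ.filter (fun i => a i ≤ y)) = (Finset.univ.filter p) from rfl, ← hm]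
    ring
  have hsum : ∑ z ∈ assignSet n n1, Real.exp (t * (empCDF n1 a z y - popCDF a y))
      = Real.exp c * ∑ z ∈ assignSet n n1,
          Real.exp (σ' * ((Finset.univ.filter (fun i => (!z i : Bool) ∧ p i)).card : ℝ)) := by
    rw [Finset.mul_sum]
    refine Finset.sum_congr rfl fun z _ => ?_
    rw [hterm z, Real.exp_add, mul_comm]
  have hflip : ∑ z ∈ assignSet n n1,
        Real.exp (σ' * ((Finset.univ.filter (fun i => (!z i : Bool) ∧ p i)).card : ℝ))
      = ∑ w ∈ assignSet n (n - n1),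
        Real.exp (σ' * ((Finset.univ.filter (fun i => w i ∧ p i)).card : ℝ)) := by
    exact flip_sum n n1 (by omega)
      (fun w => Real.exp (σ' * ((Finset.univ.filter (fun i => w i ∧ p i)).card : ℝ)))
  have hb := mgf_bound n (n - n1) hn0n p σ'
  have hchoose : n.choose (n - n1) = n.choose n1 := Nat.choose_symm (by omega)
  have hC : (0 : ℝ) < (n.choose n1 : ℝ) := by
    exact_mod_cast Nat.choose_pos (by omega : n1 ≤ n)
  have hexp : Real.exp c * Real.exp (σ' * ((n - n1 : ℕ) : ℝ) * (m : ℝ) / (n : ℝ)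
        + ((n - n1 : ℕ) : ℝ) * σ' ^ 2 / 8)
      = Real.exp (((n : ℝ) - (n1 : ℝ)) * t ^ 2 / (8 * (n1 : ℝ) ^ 2)) := by
    rw [← Real.exp_add]
    congr 1
    rw [hc, hσ', hn0cast]
    field_simp
    ring
  rw [hsum, hflip, assign_card]
  rw [div_le_iff₀ hC]
  calc Real.exp c * ∑ w ∈ assignSet n (n - n1),
        Real.exp (σ' * ((Finset.univ.filter (fun i => w i ∧ p i)).card : ℝ))
      ≤ Real.exp c * ((n.choose (n - n1) : ℝ) *
          Real.exp (σ' * ((n - n1 : ℕ) : ℝ) * (m : ℝ) / (n : ℝ)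
            + ((n - n1 : ℕ) : ℝ) * σ' ^ 2 / 8)) := by
        exact mul_le_mul_of_nonneg_left hb (le_of_lt (Real.exp_pos _))
    _ = (Real.exp c * Real.exp (σ' * ((n - n1 : ℕ) : ℝ) * (m : ℝ) / (n : ℝ)
            + ((n - n1 : ℕ) : ℝ) * σ' ^ 2 / 8)) * (n.choose (n - n1) : ℝ) := by ring
    _ = Real.exp (((n : ℝ) - (n1 : ℝ)) * t ^ 2 / (8 * (n1 : ℝ) ^ 2)) * (n.choose n1 : ℝ) := by
        rw [hexp, hchoose]

end AuxLemmasS3b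

/-- **Lemma S3** (sub-Gaussian MGF bound for the empirical distribution function under
sampling without replacement): for fixed a₁, …, a_n, 1 ≤ n₁ ≤ n − 1, n₀ = n − n₁, and Z
uniform over the 0–1 vectors with exactly n₁ ones, for all y, t ∈ ℝ:
E[exp(t(Ĝ(Z, y) − G(y)))] ≤ exp(n₀ t² / (n₁(n + 2))). -/
theorem lemmaS3 (n n1 : ℕ) (hn1 : 1 ≤ n1) (hn1' : n1 + 1 ≤ n) (a : Fin n → ℝ) :
    ∀ y t : ℝ,
      (∑ z ∈ assignSet n n1, Real.exp (t * (empCDF n1 a z y - popCDF a y)))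
          / ((assignSet n n1).card : ℝ)
        ≤ Real.exp (((n : ℝ) - (n1 : ℝ)) * t ^ 2 / ((n1 : ℝ) * ((n : ℝ) + 2))) := by
  intro y t
  have hn1R : (0 : ℝ) < (n1 : ℝ) := by exact_mod_cast hn1
  have hnn1R : (0 : ℝ) < (n : ℝ) - (n1 : ℝ) := by
    have : ((n1 : ℕ) : ℝ) + 1 ≤ ((n : ℕ) : ℝ) := by exact_mod_cast hn1'
    linarith
  have hn2R : (0 : ℝ) < (n : ℝ) + 2 := by positivity
  rcases (by omega : n + 2 ≤ 8 * (n - n1) ∨ n + 2 ≤ 8 * n1) with hcase | hcase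
  · refine le_trans (bound_one n n1 hn1 (by omega) (by omega) a y t) (Real.exp_le_exp.2 ?_)
    have hcast : (n : ℝ) + 2 ≤ 8 * ((n : ℝ) - (n1 : ℝ)) := by
      have h8 : ((n + 2 : ℕ) : ℝ) ≤ ((8 * (n - n1) : ℕ) : ℝ) := by exact_mod_cast hcase
      push_cast [Nat.cast_sub (by omega : n1 ≤ n)] at h8
      linarith
    rw [div_le_div_iff₀ (by positivity) (by positivity)]
    nlinarith [mul_le_mul_of_nonneg_left hcast
      (mul_nonneg (sq_nonneg t) (le_of_lt hn1R)), sq_nonneg t]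
  · refine le_trans (bound_two n n1 hn1 hn1' a y t) (Real.exp_le_exp.2 ?_)
    have hcast : (n : ℝ) + 2 ≤ 8 * (n1 : ℝ) := by
      have h8 : ((n + 2 : ℕ) : ℝ) ≤ ((8 * n1 : ℕ) : ℝ) := by exact_mod_cast hcase
      push_cast at h8
      linarith
    rw [div_le_div_iff₀ (by positivity) (by positivity)]
    nlinarith [mul_le_mul_of_nonneg_left hcast
      (mul_nonneg (mul_nonneg (le_of_lt hnn1R) (sq_nonneg t)) (le_of_lt hn1R))]

end
end

section
/- Exact cross-moment identity in paired experiments (from the proof of Theorem S2). In a paired randomized experiment, for every pair m: E[(τ̂ − τ)(τ̂_m − τ̂)²] = 2·( (τ_m − L_m)²/M − σ²/n )·(τ_m − τ), where L_m = Y_{m2}(1) − Y_{m1}(0) and σ² = n·Var(τ̂) = (2/M) Σ_{m'=1}^{M} (τ_{m'} − L_{m'})². -/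
open Filter MeasureTheory
open scoped BigOperators Classical

noncomputable section

/-- The standard normal cumulative distribution function. -/
def stdNormalCDF (t : ℝ) : ℝ :=
  ∫ x in Set.Iic t, Real.exp (-x ^ 2 / 2) / Real.sqrt (2 * Real.pi)

/-- The standard normal density. -/
def stdNormalPDF (x : ℝ) : ℝ := Real.exp (-x ^ 2 / 2) / Real.sqrt (2 * Real.pi)

/-- A design-based paired randomized experiment with M pairs and fixed potential
outcomes: `Ya z` for the first unit and `Yb z` for the second unit of each pair. -/
structure PairExp where
  M : ℕ
  hM : 2 ≤ M
  Ya1 : Fin M → ℝ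
  Ya0 : Fin M → ℝ
  Yb1 : Fin M → ℝ
  Yb0 : Fin M → ℝ

namespace PairExp

variable (E : PairExp)

/-- Total number of units: n = 2M. -/
def n : ℕ := 2 * E.M

/-- Sample space: within each pair, whether the first unit is treated. -/
def Ω : Type := Fin E.M → Bool

instance : Fintype E.Ω := inferInstanceAs (Fintype (Fin E.M → Bool))

/-- Probability of an event under the uniform paired randomization. -/
def pr (p : E.Ω → Prop) : ℝ :=
  ((Finset.univ.filter p).card : ℝ) / (Fintype.card E.Ω : ℝ)

/-- Expectation under the uniform paired randomization. -/
def expect (X : E.Ω → ℝ) : ℝ := (∑ ω : E.Ω, X ω) / (Fintype.card E.Ω : ℝ)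

/-- Variance under the uniform paired randomization. -/
def var (X : E.Ω → ℝ) : ℝ := E.expect (fun ω => (X ω - E.expect X) ^ 2)

/-- Pair-level ATE. -/
def taum (m : Fin E.M) : ℝ :=
  (E.Ya1 m + E.Yb1 m) / 2 - (E.Ya0 m + E.Yb0 m) / 2

/-- Average treatment effect. -/
def tau : ℝ := (∑ m, E.taum m) / (E.M : ℝ)

/-- Pair-level difference of observed outcomes. -/
def hattaum (ω : E.Ω) (m : Fin E.M) : ℝ :=
  if ω m then E.Ya1 m - E.Yb0 m else E.Yb1 m - E.Ya0 m

/-- ATE estimator τ̂. -/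
def hattau (ω : E.Ω) : ℝ := (∑ m, E.hattaum ω m) / (E.M : ℝ)

/-- σ² = n Var(τ̂). -/
def sigmaSq : ℝ := (E.n : ℝ) * E.var E.hattau

/-- Neyman-type variance estimator σ̂²_pair. -/
def hatSigmaPairSq (ω : E.Ω) : ℝ :=
  2 / ((E.M : ℝ) - 1) * ∑ m, (E.hattaum ω m - E.hattau ω) ^ 2

/-- σ²_pair = E[σ̂²_pair]. -/
def sigmaPairSq : ℝ := E.expect E.hatSigmaPairSq

/-- The imputation constant Δ = τ̂. -/
def Delta (ω : E.Ω) : ℝ := E.hattau ω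

/-- Constant-treatment-effect imputation of Y(1), first unit of each pair. -/
def Yimp1a (ω : E.Ω) (m : Fin E.M) : ℝ :=
  if ω m then E.Ya1 m else E.Ya0 m + E.Delta ω

/-- Constant-treatment-effect imputation of Y(0), first unit of each pair. -/
def Yimp0a (ω : E.Ω) (m : Fin E.M) : ℝ :=
  if ω m then E.Ya1 m - E.Delta ω else E.Ya0 m

/-- Constant-treatment-effect imputation of Y(1), second unit of each pair. -/
def Yimp1b (ω : E.Ω) (m : Fin E.M) : ℝ :=
  if ω m then E.Yb0 m + E.Delta ω else E.Yb1 m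

/-- Constant-treatment-effect imputation of Y(0), second unit of each pair. -/
def Yimp0b (ω : E.Ω) (m : Fin E.M) : ℝ :=
  if ω m then E.Yb0 m else E.Yb1 m - E.Delta ω

/-- Bootstrap estimand τ*. -/
def tauStar (ω : E.Ω) : ℝ :=
  (∑ m, ((E.Yimp1a ω m - E.Yimp0a ω m) + (E.Yimp1b ω m - E.Yimp0b ω m))) / (E.n : ℝ)

/-- Bootstrap pair-level difference of observed outcomes under assignment ω*. -/
def hattaumStar (ω ωs : E.Ω) (m : Fin E.M) : ℝ :=
  if ωs m then E.Yimp1a ω m - E.Yimp0b ω m else E.Yimp1b ω m - E.Yimp0a ω m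

/-- Bootstrap ATE estimator τ̂*. -/
def hattauStar (ω ωs : E.Ω) : ℝ := (∑ m, E.hattaumStar ω ωs m) / (E.M : ℝ)

/-- Bootstrap Neyman-type variance estimator σ̂*²_pair. -/
def hatSigmaPairSqStar (ω ωs : E.Ω) : ℝ :=
  2 / ((E.M : ℝ) - 1) * ∑ m, (E.hattaumStar ω ωs m - E.hattauStar ω ωs) ^ 2

/-- Bootstrap pivotal statistic T*_pair(ω, ω*). -/
def TStar (ω ωs : E.Ω) : ℝ :=
  Real.sqrt (E.n : ℝ) * (E.hattauStar ω ωs - E.tauStar ω)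
    / Real.sqrt (E.hatSigmaPairSqStar ω ωs)

/-- Scaled studentized statistic T_pair. -/
def Tpair (ω : E.Ω) : ℝ :=
  (Real.sqrt E.sigmaPairSq / Real.sqrt E.sigmaSq) *
    (Real.sqrt (E.n : ℝ) * (E.hattau ω - E.tau) / Real.sqrt (E.hatSigmaPairSq ω))

/-- Pair-level finite-population variance of Y(1) (pair size 2). -/
def S1sq (m : Fin E.M) : ℝ :=
  ((E.Ya1 m - (E.Ya1 m + E.Yb1 m) / 2) ^ 2 + (E.Yb1 m - (E.Ya1 m + E.Yb1 m) / 2) ^ 2)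
    / ((2 : ℝ) - 1)

/-- Pair-level finite-population variance of Y(0). -/
def S0sq (m : Fin E.M) : ℝ :=
  ((E.Ya0 m - (E.Ya0 m + E.Yb0 m) / 2) ^ 2 + (E.Yb0 m - (E.Ya0 m + E.Yb0 m) / 2) ^ 2)
    / ((2 : ℝ) - 1)

/-- Pair-level finite-population variance of individual treatment effects. -/
def Stausq (m : Fin E.M) : ℝ :=
  (((E.Ya1 m - E.Ya0 m) - E.taum m) ^ 2 + ((E.Yb1 m - E.Yb0 m) - E.taum m) ^ 2)
    / ((2 : ℝ) - 1)

/-- Overall marginal CDF of Y(1). -/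
def Gbar (y : ℝ) : ℝ :=
  (((Finset.univ.filter (fun m => E.Ya1 m ≤ y)).card : ℝ)
    + ((Finset.univ.filter (fun m => E.Yb1 m ≤ y)).card : ℝ)) / (E.n : ℝ)

/-- Overall marginal CDF of Y(0). -/
def Fbar (y : ℝ) : ℝ :=
  (((Finset.univ.filter (fun m => E.Ya0 m ≤ y)).card : ℝ)
    + ((Finset.univ.filter (fun m => E.Yb0 m ≤ y)).card : ℝ)) / (E.n : ℝ)

end PairExp

namespace PairedAux

variable (E : PairExp)

/-- Sign of the assignment in pair `i`. -/
def e (ω : E.Ω) (i : Fin E.M) : ℝ := if ω i then 1 else -1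

/-- `d i = τ_i - L_i`. -/
def d (i : Fin E.M) : ℝ := E.taum i - (E.Yb1 i - E.Ya0 i)

lemma e_sq (ω : E.Ω) (i : Fin E.M) : e E ω i * e E ω i = 1 := by
  unfold e; cases h : ω i <;> simp

lemma hattaum_eq (ω : E.Ω) (i : Fin E.M) :
    E.hattaum ω i = E.taum i + e E ω i * d E i := by
  unfold PairExp.hattaum e d PairExp.taum
  cases h : ω i <;> simp <;> ring

lemma Mne : (E.M : ℝ) ≠ 0 := by
  have h := E.hM
  have : (0:ℝ) < (E.M : ℝ) := by exact_mod_cast Nat.lt_of_lt_of_le (by norm_num) h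
  linarith

lemma hattau_eq (ω : E.Ω) :
    E.hattau ω = E.tau + (∑ i, e E ω i * d E i) / (E.M : ℝ) := by
  unfold PairExp.hattau PairExp.tau
  rw [div_add_div _ _ (Mne E) (Mne E)]
  rw [div_eq_div_iff (Mne E) (mul_ne_zero (Mne E) (Mne E))]
  rw [Finset.sum_congr rfl (fun i _ => hattaum_eq E ω i), Finset.sum_add_distrib]
  ring

/-- Flip map at coordinate `i`. -/
def flip (i : Fin E.M) (ω : E.Ω) : E.Ω := fun j => if j = i then !(ω j) else ω j

lemma flip_invol (i : Fin E.M) : Function.Involutive (flip E i) := by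
  intro ω; funext j; unfold flip; by_cases h : j = i <;> simp [h]

lemma sum_zero_of_flip (i : Fin E.M) (X : E.Ω → ℝ)
    (h : ∀ ω : E.Ω, X (flip E i ω) = - X ω) : ∑ ω : E.Ω, X ω = 0 := by
  have h1 : ∑ ω : E.Ω, X ω = ∑ ω : E.Ω, X (flip E i ω) :=
    (Equiv.sum_comp ((flip_invol E i).toPerm _) X).symm
  have h2 : ∑ ω : E.Ω, X (flip E i ω) = - ∑ ω : E.Ω, X ω := by
    simp only [h]; exact Finset.sum_neg_distrib (f := X)
  linarith [h1, h2]

/-- Global flip map. -/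
def gflip (ω : E.Ω) : E.Ω := fun j => !(ω j)

lemma gflip_invol : Function.Involutive (gflip E) := by
  intro ω; funext j; simp [gflip]

lemma sum_zero_of_gflip (X : E.Ω → ℝ)
    (h : ∀ ω : E.Ω, X (gflip E ω) = - X ω) : ∑ ω : E.Ω, X ω = 0 := by
  have h1 : ∑ ω : E.Ω, X ω = ∑ ω : E.Ω, X (gflip E ω) :=
    (Equiv.sum_comp ((gflip_invol E).toPerm _) X).symm
  have h2 : ∑ ω : E.Ω, X (gflip E ω) = - ∑ ω : E.Ω, X ω := by
    simp only [h]; exact Finset.sum_neg_distrib (f := X)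
  linarith [h1, h2]

lemma e_flip_self (i : Fin E.M) (ω : E.Ω) : e E (flip E i ω) i = - e E ω i := by
  unfold e flip; cases h : ω i <;> simp [h]

lemma e_flip_ne (i j : Fin E.M) (hij : j ≠ i) (ω : E.Ω) :
    e E (flip E i ω) j = e E ω j := by
  unfold e flip; simp [hij]

lemma e_gflip (i : Fin E.M) (ω : E.Ω) : e E (gflip E ω) i = - e E ω i := by
  unfold e gflip; cases h : ω i <;> simp [h]

lemma sum_e (i : Fin E.M) : ∑ ω : E.Ω, e E ω i = 0 := by
  apply sum_zero_of_flip E i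
  intro ω; exact e_flip_self E i ω

lemma sum_e_mul (i j : Fin E.M) :
    ∑ ω : E.Ω, e E ω i * e E ω j =
      if i = j then (Fintype.card E.Ω : ℝ) else 0 := by
  by_cases hij : i = j
  · subst hij
    simp only [if_pos rfl]
    rw [Finset.sum_congr rfl (fun ω _ => e_sq E ω i)]
    simp
  · rw [if_neg hij]
    apply sum_zero_of_flip E i
    intro ω
    rw [e_flip_self E i ω, e_flip_ne E i j (fun h => hij h.symm) ω]
    ring

/-- Unnormalized sum `∑ i, e_i d_i` (so that `τ̂ - τ = S/M`). -/
def S (ω : E.Ω) : ℝ := ∑ i, e E ω i * d E i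

lemma hcard : (Fintype.card E.Ω : ℝ) ≠ 0 := by
  haveI : Nonempty E.Ω := ⟨fun _ => true⟩
  have : 0 < Fintype.card E.Ω := Fintype.card_pos
  positivity

lemma S_gflip (ω : E.Ω) : S E (gflip E ω) = - S E ω := by
  unfold S
  rw [← Finset.sum_neg_distrib]
  exact Finset.sum_congr rfl fun i _ => by rw [e_gflip]; ring

lemma sum_S : ∑ ω : E.Ω, S E ω = 0 := by
  apply sum_zero_of_gflip
  exact S_gflip E

lemma sum_e_mul_S (m : Fin E.M) :
    ∑ ω : E.Ω, e E ω m * S E ω = (Fintype.card E.Ω : ℝ) * d E m := by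
  have h1 : ∀ ω : E.Ω, e E ω m * S E ω = ∑ i, (e E ω m * e E ω i) * d E i := by
    intro ω; unfold S; rw [Finset.mul_sum]; exact Finset.sum_congr rfl fun i _ => by ring
  rw [Finset.sum_congr rfl fun ω _ => h1 ω, Finset.sum_comm]
  have h2 : ∀ i : Fin E.M, ∑ ω : E.Ω, (e E ω m * e E ω i) * d E i =
      (if m = i then (Fintype.card E.Ω : ℝ) else 0) * d E i := by
    intro i; rw [← Finset.sum_mul, sum_e_mul]
  rw [Finset.sum_congr rfl fun i _ => h2 i]
  simp [Finset.sum_ite_eq]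

lemma sum_S_sq : ∑ ω : E.Ω, (S E ω) ^ 2 = (Fintype.card E.Ω : ℝ) * ∑ i, (d E i) ^ 2 := by
  have h1 : ∀ ω : E.Ω, (S E ω) ^ 2 = ∑ i, ∑ j, (e E ω i * e E ω j) * (d E i * d E j) := by
    intro ω
    unfold S
    rw [sq, Finset.sum_mul_sum]
    exact Finset.sum_congr rfl fun i _ => Finset.sum_congr rfl fun j _ => by ring
  rw [Finset.sum_congr rfl fun ω _ => h1 ω, Finset.sum_comm]
  have h2 : ∀ i : Fin E.M, ∑ ω : E.Ω, ∑ j, (e E ω i * e E ω j) * (d E i * d E j) =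
      (Fintype.card E.Ω : ℝ) * (d E i) ^ 2 := by
    intro i
    rw [Finset.sum_comm]
    have h3 : ∀ j : Fin E.M, ∑ ω : E.Ω, (e E ω i * e E ω j) * (d E i * d E j) =
        (if i = j then (Fintype.card E.Ω : ℝ) else 0) * (d E i * d E j) := by
      intro j; rw [← Finset.sum_mul, sum_e_mul]
    rw [Finset.sum_congr rfl fun j _ => h3 j]
    simp [Finset.sum_ite_eq, sq]
  rw [Finset.sum_congr rfl fun i _ => h2 i, ← Finset.mul_sum]

lemma expect_hattau : E.expect E.hattau = E.tau := by
  unfold PairExp.expect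
  rw [Finset.sum_congr rfl fun ω _ => hattau_eq E ω]
  rw [Finset.sum_add_distrib, Finset.sum_const]
  have : ∑ ω : E.Ω, (∑ i, e E ω i * d E i) / (E.M : ℝ) = 0 := by
    rw [← Finset.sum_div]
    have := sum_S E
    unfold S at this
    rw [this]; simp
  rw [this]
  rw [add_zero, nsmul_eq_mul, Finset.card_univ, mul_comm, mul_div_assoc, div_self (hcard E), mul_one]

lemma var_hattau : E.var E.hattau = (∑ i, (d E i) ^ 2) / (E.M : ℝ) ^ 2 := by
  unfold PairExp.var
  rw [expect_hattau]
  unfold PairExp.expect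
  have h1 : ∀ ω : E.Ω, (E.hattau ω - E.tau) ^ 2 = (S E ω) ^ 2 / (E.M : ℝ) ^ 2 := by
    intro ω; rw [hattau_eq E ω]; unfold S; ring
  rw [Finset.sum_congr rfl fun ω _ => h1 ω, ← Finset.sum_div, sum_S_sq]
  rw [div_div, mul_comm ((Fintype.card E.Ω : ℝ)) _, mul_div_assoc]
  have hx : (Fintype.card E.Ω : ℝ) / ((E.M : ℝ) ^ 2 * (Fintype.card E.Ω : ℝ)) =
      1 / (E.M : ℝ) ^ 2 := by
    rw [mul_comm, ← div_div, div_self (hcard E)]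
  rw [hx, mul_one_div]

lemma sigmaSq_div_n : E.sigmaSq / (E.n : ℝ) = (∑ i, (d E i) ^ 2) / (E.M : ℝ) ^ 2 := by
  unfold PairExp.sigmaSq
  have hn : (E.n : ℝ) ≠ 0 := by
    unfold PairExp.n
    push_cast
    have := Mne E
    positivity
  rw [mul_comm, mul_div_assoc, div_self hn, mul_one]
  exact var_hattau E

end PairedAux

/-- **Exact cross-moment identity in paired experiments**: for every pair m,
E[(τ̂ − τ)(τ̂_m − τ̂)²] = 2((τ_m − L_m)²/M − σ²/n)(τ_m − τ), where
L_m = Y_{m2}(1) − Y_{m1}(0) and σ² = n·Var(τ̂). -/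
theorem paired_cross_moment_identity (E : PairExp) (m : Fin E.M) :
    E.expect (fun ω => (E.hattau ω - E.tau) * (E.hattaum ω m - E.hattau ω) ^ 2) =
      2 * ((E.taum m - (E.Yb1 m - E.Ya0 m)) ^ 2 / (E.M : ℝ) - E.sigmaSq / (E.n : ℝ)) *
        (E.taum m - E.tau) := by
  classical
  open PairedAux in
  have hMne : (E.M : ℝ) ≠ 0 := Mne E
  have hpt : ∀ ω : E.Ω,
      (E.hattau ω - E.tau) * (E.hattaum ω m - E.hattau ω) ^ 2 =
        ((S E ω / (E.M : ℝ)) * (E.taum m - E.tau) ^ 2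
          + (S E ω / (E.M : ℝ)) * (e E ω m * d E m) ^ 2
          + (S E ω / (E.M : ℝ)) ^ 3
          - 2 * (e E ω m * d E m) * (S E ω / (E.M : ℝ)) ^ 2)
        + (2 * (E.taum m - E.tau) * d E m / (E.M : ℝ)) * (e E ω m * S E ω)
        - (2 * (E.taum m - E.tau) / (E.M : ℝ) ^ 2) * (S E ω) ^ 2 := by
    intro ω
    rw [hattau_eq E ω, hattaum_eq E ω m]
    show (E.tau + S E ω / (E.M : ℝ) - E.tau) *
        (E.taum m + e E ω m * d E m - (E.tau + S E ω / (E.M : ℝ))) ^ 2 = _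
    ring
  have hG : ∑ ω : E.Ω,
      ((S E ω / (E.M : ℝ)) * (E.taum m - E.tau) ^ 2
        + (S E ω / (E.M : ℝ)) * (e E ω m * d E m) ^ 2
        + (S E ω / (E.M : ℝ)) ^ 3
        - 2 * (e E ω m * d E m) * (S E ω / (E.M : ℝ)) ^ 2) = 0 := by
    apply sum_zero_of_gflip
    intro ω
    show (S E (gflip E ω) / (E.M : ℝ)) * (E.taum m - E.tau) ^ 2
        + (S E (gflip E ω) / (E.M : ℝ)) * (e E (gflip E ω) m * d E m) ^ 2
        + (S E (gflip E ω) / (E.M : ℝ)) ^ 3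
        - 2 * (e E (gflip E ω) m * d E m) * (S E (gflip E ω) / (E.M : ℝ)) ^ 2 = _
    rw [S_gflip, e_gflip]
    ring
  have hd : E.taum m - (E.Yb1 m - E.Ya0 m) = d E m := rfl
  rw [hd, sigmaSq_div_n E]
  unfold PairExp.expect
  rw [Finset.sum_congr rfl fun ω _ => hpt ω, Finset.sum_sub_distrib,
    Finset.sum_add_distrib, hG, ← Finset.mul_sum, ← Finset.mul_sum,
    sum_e_mul_S, sum_S_sq, zero_add]
  have hc : (Fintype.card E.Ω : ℝ) ≠ 0 := hcard E
  field_simp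


end
end
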